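/- Let d ≥ 1 and let H be a Hermitian d×d complex matrix that is path-connected, i.e., the simple graph on {1,…,d} in which i and j are adjacent exactly when i ≠ j and H_{ij} ≠ 0 is connected. Then the complex Lie subalgebra of gl(d,ℂ) generated by the set of all diagonal matrices together with H equals all of gl(d,ℂ). -/

import Mathlib

open Matrix

attribute [local instance 100] LieRing.ofAssociativeRing

section aux

variable {d : ℕ} (H : Matrix (Fin d) (Fin d) ℂ)

private lemma sandwich (i j : Fin d) :
    single i i (1:ℂ) * H * single j j (1:ℂ) = single i j (H i j) := by
  ext a b
  by_cases hb : b = j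
  · subst hb
    rw [mul_single_apply_same 1 b b a]
    by_cases ha : a = i
    · subst ha
      rw [single_mul_apply_same 1 a a b]
      simp [single]
    · rw [single_mul_apply_of_ne 1 i i a b ha]
      simp [single, Ne.symm ha]
  · rw [mul_single_apply_of_ne 1 j j a b hb]
    simp [single, Ne.symm hb]

private lemma sb_neg (i j : Fin d) (c : ℂ) :
    single i j (-c) = -single i j c := by
  ext a b
  simp only [single, of_apply, Matrix.neg_apply]
  split_ifs <;> simp

end aux

theorem stmt_2 (d : ℕ) (hd : 1 ≤ d) (H : Matrix (Fin d) (Fin d) ℂ)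
    (hH : H.IsHermitian)
    (hconn : (SimpleGraph.fromRel (fun i j : Fin d => H i j ≠ 0)).Connected) :
    LieSubalgebra.lieSpan ℂ (Matrix (Fin d) (Fin d) ℂ)
      ({M : Matrix (Fin d) (Fin d) ℂ | M.IsDiag} ∪ {H}) = ⊤ := by
  set L := LieSubalgebra.lieSpan ℂ (Matrix (Fin d) (Fin d) ℂ)
      ({M : Matrix (Fin d) (Fin d) ℂ | M.IsDiag} ∪ {H}) with hL
  -- diagonal basis matrices belong to L
  have hdiag : ∀ (i : Fin d) (c : ℂ), single i i c ∈ L := by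
    intro i c
    apply LieSubalgebra.subset_lieSpan
    left
    intro a b hab
    simp only [single, of_apply]
    rw [if_neg]
    rintro ⟨rfl, rfl⟩; exact hab rfl
  have hHmem : H ∈ L := LieSubalgebra.subset_lieSpan (Or.inr rfl)
  -- for an "edge" (i ≠ j, H i j ≠ 0) the off-diagonal basis matrix is in L
  have hedge : ∀ i j : Fin d, i ≠ j → H i j ≠ 0 → single i j (1:ℂ) ∈ L := by
    intro i j hij hne
    set E : Fin d → Fin d → ℂ → Matrix (Fin d) (Fin d) ℂ := single with hE
    have hA : ⁅E i i 1, ⁅E j j 1, H⁆⁆ ∈ L := L.lie_mem (hdiag i 1) (L.lie_mem (hdiag j 1) hHmem)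
    have hB : ⁅E i i 1, ⁅E i i 1, ⁅E j j 1, H⁆⁆⁆ ∈ L := L.lie_mem (hdiag i 1) hA
    have e1 : E i i 1 * E j j 1 = 0 := single_mul_single_of_ne 1 i i j hij 1
    have e2 : E j j 1 * E i i 1 = 0 := single_mul_single_of_ne 1 j j i (Ne.symm hij) 1
    have s1 : E i i 1 * H * E j j 1 = single i j (H i j) := sandwich H i j
    have s2 : E j j 1 * H * E i i 1 = single j i (H j i) := sandwich H j i
    have key1 : (E i i 1) * ⁅E j j 1, H⁆ = - single i j (H i j) := by
      rw [Ring.lie_def, mul_sub, ← mul_assoc, e1, zero_mul, zero_sub, ← mul_assoc, s1]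
    have key2 : ⁅E j j 1, H⁆ * (E i i 1) = single j i (H j i) := by
      rw [Ring.lie_def, sub_mul, s2, mul_assoc, e2, mul_zero, sub_zero]
    have A_eq : ⁅E i i 1, ⁅E j j 1, H⁆⁆
        = -single i j (H i j) - single j i (H j i) := by
      rw [Ring.lie_def, key1, key2]
    have b1 : E i i 1 * single i j (H i j) = single i j (H i j) := by
      rw [hE, single_mul_single_same, one_mul]
    have b2 : single i j (H i j) * E i i 1 = 0 :=
      single_mul_single_of_ne (H i j) i j i (Ne.symm hij) 1
    have b3 : E i i 1 * single j i (H j i) = 0 :=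
      single_mul_single_of_ne 1 i i j hij (H j i)
    have b4 : single j i (H j i) * E i i 1 = single j i (H j i) := by
      rw [hE, single_mul_single_same, mul_one]
    have B_eq : ⁅E i i 1, -single i j (H i j) - single j i (H j i)⁆
        = -single i j (H i j) + single j i (H j i) := by
      simp only [Ring.lie_def, mul_sub, sub_mul, mul_neg, neg_mul, b1, b2, b3, b4,
        neg_zero, mul_zero, zero_mul, sub_zero, zero_sub, sub_neg_eq_add]
    have hkey : ⁅E i i 1, ⁅E j j 1, H⁆⁆ + ⁅E i i 1, ⁅E i i 1, ⁅E j j 1, H⁆⁆⁆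
        = (-(2 * H i j)) • single i j (1:ℂ) := by
      rw [A_eq, B_eq, smul_single, smul_eq_mul, mul_one,
        show -(2 * H i j) = -(H i j) + -(H i j) by ring, single_add,
        sb_neg]
      abel
    have hsum : ((-(2 * H i j)) • single i j (1:ℂ)) ∈ L := by
      rw [← hkey]; exact L.add_mem hA hB
    have hc : (-(2 * H i j)) ≠ 0 := by
      simp only [ne_eq, neg_eq_zero, mul_eq_zero, not_or]
      exact ⟨two_ne_zero, hne⟩
    have := L.smul_mem (-(2 * H i j))⁻¹ hsum
    rwa [smul_smul, inv_mul_cancel₀ hc, one_smul] at this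
  -- adjacency in the graph gives both H i j ≠ 0 and H j i ≠ 0
  have hherm : ∀ i j : Fin d, H i j ≠ 0 → H j i ≠ 0 := by
    intro i j h
    have : H j i = (starRingEnd ℂ) (H i j) := by
      conv_lhs => rw [← hH]
      simp [Matrix.conjTranspose_apply]
    rw [this]
    simpa using h
  set G := SimpleGraph.fromRel (fun i j : Fin d => H i j ≠ 0) with hG
  have hadj : ∀ i j : Fin d, G.Adj i j → single i j (1:ℂ) ∈ L := by
    intro i j hij
    rw [hG, SimpleGraph.fromRel_adj] at hij
    obtain ⟨hne, h | h⟩ := hij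
    · exact hedge i j hne h
    · exact hedge i j hne (hherm j i h)
  -- walk induction
  have hwalk : ∀ {i j : Fin d}, G.Walk i j → i ≠ j → single i j (1:ℂ) ∈ L := by
    intro i j w
    induction w with
    | nil => intro h; exact absurd rfl h
    | @cons a b c hab w ih =>
      intro hac
      by_cases hbc : b = c
      · subst hbc; exact hadj a b hab
      · have h1 := hadj a b hab
        have h2 := ih hbc
        have hbr : ⁅single a b (1:ℂ), single b c (1:ℂ)⁆
            = single a c (1:ℂ) := by
          rw [Ring.lie_def, single_mul_single_same,
            single_mul_single_of_ne 1 b c a (Ne.symm hac) 1, one_mul, sub_zero]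
        rw [← hbr]
        exact L.lie_mem h1 h2
  have hall : ∀ i j : Fin d, ∀ c : ℂ, single i j c ∈ L := by
    intro i j c
    by_cases hij : i = j
    · subst hij; exact hdiag i c
    · obtain ⟨w⟩ := hconn i j
      have h1 := hwalk w hij
      have := L.smul_mem c h1
      rwa [smul_single, smul_eq_mul, mul_one] at this
  rw [eq_top_iff]
  intro M _
  rw [matrix_eq_sum_single M]
  exact Submodule.sum_mem L.toSubmodule fun i _ =>
    Submodule.sum_mem L.toSubmodule fun j _ => hall i j (M i j)
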